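/- Let (R, i, χ) be an I-Frobenius A-ring with a right grouplike character, and define the trace map tr : J → B by tr(v) = χ(g(v ⊗_A χ(e¹)u¹) e²). Then A is projective as a right R-module if and only if there exists v ∈ J such that tr(v) = 1_B. -/

import Mathlib

open MulOpposite

/-- Let `(R, i, χ)` be an `I`-Frobenius `A`-ring with a right grouplike
character (same setup and rendering conventions as in Statement 8), and define the trace
map `tr : J → B` by `tr v = χ (g(v ⊗ χ(e¹)u¹) e²)`. Then `A` is projective as a right
`R`-module (via `a ↼ r = χ (i a * r)`) if and only if there exists `v ∈ J` with
`tr v = 1`. -/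
theorem frobenius_projective_iff_trace_one
    {A R : Type u} [Ring A] [Ring R] (i : A →+* R) (χ : R →+ A)
    (hχA : ∀ (r : R) (a : A), χ (r * i a) = χ r * a)
    (hχmul : ∀ r s : R, χ (i (χ r) * s) = χ (r * s))
    (hχone : χ (1 : R) = 1)
    -- the A-bimodules I and J
    {I J : Type u}
    [AddCommGroup I] [Module A I] [Module Aᵐᵒᵖ I] [SMulCommClass A Aᵐᵒᵖ I]
    [AddCommGroup J] [Module A J] [Module Aᵐᵒᵖ J] [SMulCommClass A Aᵐᵒᵖ J]
    -- the Morita context map f : I ⊗_A J → A, as a balanced biadditive map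
    (fm : I → J → A)
    (hfadd₁ : ∀ (u u' : I) (v : J), fm (u + u') v = fm u v + fm u' v)
    (hfadd₂ : ∀ (u : I) (v v' : J), fm u (v + v') = fm u v + fm u v')
    (hfbal : ∀ (a : A) (u : I) (v : J), fm (op a • u) v = fm u (a • v))
    (hfleft : ∀ (a : A) (u : I) (v : J), fm (a • u) v = a * fm u v)
    (hfright : ∀ (a : A) (u : I) (v : J), fm u (op a • v) = fm u v * a)
    -- the Morita context map g : J ⊗_A I → A
    (gm : J → I → A)
    (hgadd₁ : ∀ (v v' : J) (u : I), gm (v + v') u = gm v u + gm v' u)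
    (hgadd₂ : ∀ (v : J) (u u' : I), gm v (u + u') = gm v u + gm v u')
    (hgbal : ∀ (a : A) (v : J) (u : I), gm (op a • v) u = gm v (a • u))
    (hgleft : ∀ (a : A) (v : J) (u : I), gm (a • v) u = a * gm v u)
    (hgright : ∀ (a : A) (v : J) (u : I), gm v (op a • u) = gm v u * a)
    -- associativity of the Morita context: f(u ⊗ v)u' = u g(v ⊗ u'), g(v ⊗ u)v' = v f(u ⊗ v')
    (hassoc₁ : ∀ (u : I) (v : J) (u' : I), fm u v • u' = op (gm v u') • u)
    (hassoc₂ : ∀ (v : J) (u : I) (v' : J), gm v u • v' = op (fm u v') • v)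
    -- strictness: f and g are surjective (hence bijective); ∑ⱼ uⱼ ⊗ vⱼ represents f⁻¹(1)
    {n₁ : ℕ} (U : Fin n₁ → I) (V : Fin n₁ → J) (hUV : ∑ j, fm (U j) (V j) = 1)
    {n₂ : ℕ} (V' : Fin n₂ → J) (U' : Fin n₂ → I) (hVU : ∑ j, gm (V' j) (U' j) = 1)
    -- the Frobenius element e = ∑ₖ e¹ₖ ⊗ u¹ₖ ⊗ e²ₖ ∈ R ⊗_A I ⊗_A R
    {nf : ℕ} (e₁ : Fin nf → R) (uu : Fin nf → I) (e₂ : Fin nf → R)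
    -- the Frobenius map ν̄ : R ⊗_A I → A, as a balanced biadditive A-bimodule map
    (ν : R → I → A)
    (hνadd₁ : ∀ (r r' : R) (w : I), ν (r + r') w = ν r w + ν r' w)
    (hνadd₂ : ∀ (r : R) (w w' : I), ν r (w + w') = ν r w + ν r w')
    (hνbal : ∀ (a : A) (r : R) (w : I), ν (r * i a) w = ν r (a • w))
    (hνleft : ∀ (a : A) (r : R) (w : I), ν (i a * r) w = a * ν r w)
    (hνright : ∀ (a : A) (r : R) (w : I), ν r (op a • w) = ν r w * a)
    -- (3.1.1): the Casimir condition r e¹ ⊗ u¹ ⊗ e² = e¹ ⊗ u¹ ⊗ e² r in R ⊗_A I ⊗_A R,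
    -- tested against arbitrary balanced triadditive maps
    (hCas : ∀ (P : Type u) (_ : AddCommGroup P) (T : R → I → R → P),
      (∀ r r' w s, T (r + r') w s = T r w s + T r' w s) →
      (∀ r w w' s, T r (w + w') s = T r w s + T r w' s) →
      (∀ r w s s', T r w (s + s') = T r w s + T r w s') →
      (∀ (a : A) r w s, T (r * i a) w s = T r (a • w) s) →
      (∀ (a : A) r w s, T r (op a • w) s = T r w (i a * s)) →
      ∀ r : R, ∑ k, T (r * e₁ k) (uu k) (e₂ k) = ∑ k, T (e₁ k) (uu k) (e₂ k * r))
    -- (3.1.2): ν̄(e¹ ⊗ u¹) e² = 1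
    (hfrob₂ : ∑ k, i (ν (e₁ k) (uu k)) * e₂ k = 1)
    -- (3.1.3): e¹ ⊗ u¹ ν̄(e² ⊗ u) = 1 ⊗ u in R ⊗_A I, tested against balanced biadditive maps
    (hfrob₃ : ∀ (P : Type u) (_ : AddCommGroup P) (T : R → I → P),
      (∀ r r' w, T (r + r') w = T r w + T r' w) →
      (∀ r w w', T r (w + w') = T r w + T r w') →
      (∀ (a : A) r w, T (r * i a) w = T r (a • w)) →
      ∀ w : I, ∑ k, T (e₁ k) (op (ν (e₂ k) w) • uu k) = T 1 w)
    -- A as a right R-module via a ↼ r = χ (i a * r)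
    [Module Rᵐᵒᵖ A]
    (hsmul : ∀ (r : R) (a : A), op r • a = χ (i a * r)) :
    Module.Projective Rᵐᵒᵖ A ↔
      ∃ v : J, χ (∑ k, i (gm v (χ (e₁ k) • uu k)) * e₂ k) = 1 := by
  classical
  -- χ (i a) = a
  have hχi : ∀ a : A, χ (i a) = a := by
    intro a
    have h := hχA 1 a
    rwa [one_mul, hχone, one_mul] at h
  -- R is projective as a right R-module (i.e. as Rᵐᵒᵖ-module)
  haveI hRproj : Module.Projective Rᵐᵒᵖ R := by
    refine Module.Projective.of_equiv (M := Rᵐᵒᵖ)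
      (show Rᵐᵒᵖ ≃ₗ[Rᵐᵒᵖ] R from
      { toFun := unop, invFun := op, map_add' := fun x y => rfl,
        map_smul' := fun r x => rfl,
        left_inv := fun x => rfl, right_inv := fun x => rfl })
  -- χ as a right R-linear map R → A
  let lχ : R →ₗ[Rᵐᵒᵖ] A :=
    { toFun := χ, map_add' := χ.map_add,
      map_smul' := by
        intro r x
        obtain ⟨r, rfl⟩ : ∃ s, op s = r := ⟨r.unop, rfl⟩
        simp only [RingHom.id_apply]
        rw [op_smul_eq_mul, hsmul, hχmul] }
  have hχsurj : Function.Surjective lχ := fun a => ⟨i a, hχi a⟩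
  rw [Module.Projective.iff_split_of_projective lχ hχsurj]
  constructor
  · -- splitting ⇒ trace-one element
    rintro ⟨σ, hσ⟩
    set s : R := σ 1 with hs
    have hσ' : ∀ a : A, χ (σ a) = a := fun a => LinearMap.congr_fun hσ a
    have hσa : ∀ a : A, σ a = s * i a := by
      intro a
      have h1 : op (i a) • (1 : A) = a := by
        rw [hsmul, map_one, one_mul, hχi]
      calc σ a = σ (op (i a) • (1 : A)) := by rw [h1]
        _ = op (i a) • σ 1 := map_smul σ _ _
        _ = s * i a := by rw [op_smul_eq_mul]
    have hχs : χ s = 1 := by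
      have := hσ' 1
      rwa [hσa 1, map_one, mul_one] at this
    have hs2 : ∀ r : R, s * i (χ r) = s * r := by
      intro r
      have h1 : op r • (1 : A) = χ r := by rw [hsmul, map_one, one_mul]
      have h2 : σ (χ r) = s * r := by
        rw [← h1, map_smul σ, op_smul_eq_mul, ← hs]
      rw [← h2, hσa]
    -- the element v and the key identity gm v w = ν s w
    refine ⟨∑ m, ν s (U m) • V m, ?_⟩
    have hgsum : ∀ (w : I) (c : Fin n₁ → J),
        gm (∑ m, c m) w = ∑ m, gm (c m) w := fun w c =>
      map_sum (AddMonoidHom.mk' (fun v => gm v w) (fun a b => hgadd₁ a b w)) c Finset.univ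
    have hνsum : ∀ (r : R) (c : Fin n₁ → I),
        ν r (∑ m, c m) = ∑ m, ν r (c m) := fun r c =>
      map_sum (AddMonoidHom.mk' (fun w => ν r w) (fun a b => hνadd₂ r a b)) c Finset.univ
    have hone : ∀ w : I, ∑ m, op (gm (V m) w) • U m = w := by
      intro w
      have : ∀ m, op (gm (V m) w) • U m = fm (U m) (V m) • w := fun m => (hassoc₁ _ _ _).symm
      rw [Finset.sum_congr rfl (fun m _ => this m), ← Finset.sum_smul, hUV, one_smul]
    have key : ∀ w : I, gm (∑ m, ν s (U m) • V m) w = ν s w := by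
      intro w
      rw [hgsum]
      calc ∑ m, gm (ν s (U m) • V m) w
          = ∑ m, ν s (U m) * gm (V m) w := by
            exact Finset.sum_congr rfl fun m _ => hgleft _ _ _
        _ = ∑ m, ν s (op (gm (V m) w) • U m) := by
            exact Finset.sum_congr rfl fun m _ => (hνright _ _ _).symm
        _ = ν s (∑ m, op (gm (V m) w) • U m) := (hνsum s _).symm
        _ = ν s w := by rw [hone]
    -- the Casimir condition applied to T r w t = i (ν r w) * t at r = s
    have hcas := hCas R inferInstance (fun r w t => i (ν r w) * t)
      (fun r r' w t => by beta_reduce; rw [hνadd₁, map_add, add_mul])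
      (fun r w w' t => by beta_reduce; rw [hνadd₂, map_add, add_mul])
      (fun r w t t' => by beta_reduce; rw [mul_add])
      (fun a r w t => by beta_reduce; rw [hνbal])
      (fun a r w t => by beta_reduce; rw [hνright, map_mul, mul_assoc])
      s
    have hss : ∑ k, i (ν (s * e₁ k) (uu k)) * e₂ k = s := by
      rw [hcas]
      calc ∑ k, i (ν (e₁ k) (uu k)) * (e₂ k * s)
          = (∑ k, i (ν (e₁ k) (uu k)) * e₂ k) * s := by
            rw [Finset.sum_mul]
            exact Finset.sum_congr rfl fun k _ => (mul_assoc _ _ _).symm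
        _ = s := by rw [hfrob₂, one_mul]
    calc χ (∑ k, i (gm (∑ m, ν s (U m) • V m) (χ (e₁ k) • uu k)) * e₂ k)
        = χ (∑ k, i (ν (s * e₁ k) (uu k)) * e₂ k) := by
          congr 1
          refine Finset.sum_congr rfl fun k _ => ?_
          rw [key, ← hνbal, hs2]
      _ = 1 := by rw [hss, hχs]
  · -- trace-one element ⇒ splitting
    rintro ⟨v, hv⟩
    -- the candidate splitting map
    set σf : A → R := fun a => ∑ k, i (gm v (χ (i a * e₁ k) • uu k)) * e₂ k with hσf
    have hadd : ∀ a a' : A, σf (a + a') = σf a + σf a' := by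
      intro a a'
      rw [hσf]
      simp only
      rw [← Finset.sum_add_distrib]
      refine Finset.sum_congr rfl fun k _ => ?_
      rw [map_add i, add_mul, map_add χ, add_smul, hgadd₂, map_add, add_mul]
    have hsmul' : ∀ (r : R) (a : A), σf (op r • a) = σf a * r := by
      intro r a
      have hcas := hCas R inferInstance
        (fun r' w t => i (gm v (χ (i a * r') • w)) * t)
        (fun r' r'' w t => by
          beta_reduce
          rw [mul_add, map_add χ, add_smul, hgadd₂, map_add, add_mul])
        (fun r' w w' t => by beta_reduce; rw [smul_add, hgadd₂, map_add, add_mul])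
        (fun r' w t t' => by beta_reduce; rw [mul_add])
        (fun b r' w t => by
          beta_reduce
          rw [← mul_assoc, hχA, mul_smul])
        (fun b r' w t => by
          beta_reduce
          rw [smul_comm, hgright, map_mul i, mul_assoc])
        r
      have hL : σf (op r • a) = ∑ k, i (gm v (χ (i a * (r * e₁ k)) • uu k)) * e₂ k := by
        rw [hsmul, hσf]
        refine Finset.sum_congr rfl fun k _ => ?_
        rw [← mul_assoc, hχmul, mul_assoc]
      have hR : ∑ k, i (gm v (χ (i a * e₁ k) • uu k)) * (e₂ k * r) = σf a * r := by
        rw [hσf]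
        simp only
        rw [Finset.sum_mul]
        exact Finset.sum_congr rfl fun k _ => (mul_assoc _ _ _).symm
      rw [hL, hcas, hR]
    have hχσ : ∀ a : A, χ (σf a) = a := by
      intro a
      have hcas := hCas A inferInstance
        (fun r' w t => χ (i (gm v (χ r' • w)) * t))
        (fun r' r'' w t => by
          beta_reduce
          rw [map_add χ, add_smul, hgadd₂, map_add, add_mul, map_add χ])
        (fun r' w w' t => by beta_reduce; rw [smul_add, hgadd₂, map_add, add_mul, map_add χ])
        (fun r' w t t' => by beta_reduce; rw [mul_add, map_add χ])
        (fun b r' w t => by beta_reduce; rw [hχA, mul_smul])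
        (fun b r' w t => by beta_reduce; rw [smul_comm, hgright, map_mul i, mul_assoc])
        (i a)
      have hL : χ (σf a) = ∑ k, χ (i (gm v (χ (i a * e₁ k) • uu k)) * e₂ k) := by
        rw [hσf]; exact map_sum χ _ _
      have hR : ∑ k, χ (i (gm v (χ (e₁ k) • uu k)) * (e₂ k * i a)) = a := by
        calc ∑ k, χ (i (gm v (χ (e₁ k) • uu k)) * (e₂ k * i a))
            = ∑ k, χ (i (gm v (χ (e₁ k) • uu k)) * e₂ k) * a := by
              refine Finset.sum_congr rfl fun k _ => ?_
              rw [← mul_assoc, hχA]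
          _ = χ (∑ k, i (gm v (χ (e₁ k) • uu k)) * e₂ k) * a := by
              rw [map_sum χ, Finset.sum_mul]
          _ = a := by rw [hv, one_mul]
      rw [hL, hcas, hR]
    refine ⟨{ toFun := σf, map_add' := hadd,
              map_smul' := by
                intro r x
                obtain ⟨r, rfl⟩ : ∃ t, op t = r := ⟨r.unop, rfl⟩
                simp only [RingHom.id_apply]
                rw [hsmul' r x, op_smul_eq_mul] }, ?_⟩
    ext a
    exact hχσ a
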